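/- Let G be a finite simple graph and define the iterated line graphs by L⁰(G) = G and L^{k+1}(G) = L(L^k(G)). Let A be the adjacency matrix of G over ℝ, and for each k let H^{(k,k+1)} be the incidence matrix of L^k(G) (a matrix indexed by V(L^k(G)) × E(L^k(G)), where E(L^k(G)) = V(L^{k+1}(G))). For m ≥ 1, set H^{(m)} = H^{(0,1)} · H^{(1,2)} · ... · H^{(m-1,m)}. If for every k with 0 ≤ k ≤ m−1 the graph L^k(G) has no isolated vertices, then for all vertices u, v of G: ((A + I)^m)_{uv} > 0 if and only if (H^{(m)} (H^{(m)})ᵀ)_{uv} > 0. (This is the paper's Lemma 1.) -/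

import Mathlib

open Matrix
open scoped Classical

universe u

/-- The incidence matrix of a simple graph `G`, indexed by vertices and edges:
the entry at `(v, e)` is `1` if `v` is an endpoint of `e`, and `0` otherwise. -/
noncomputable def edgeIncMatrix {V : Type u} (G : SimpleGraph V) : Matrix V G.edgeSet ℝ :=
  fun v e => if v ∈ (e : Sym2 V) then 1 else 0

/-- The iterated line graphs of `G` (bundled with their vertex types):
`L⁰(G) = G` and `L^{k+1}(G) = L(L^k(G))`.  The vertex type of `L^{k+1}(G)` is the
edge set of `L^k(G)`. -/
def iterLineGraph {V : Type u} (G : SimpleGraph V) : ℕ → Σ α : Type u, SimpleGraph α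
  | 0 => ⟨V, G⟩
  | k + 1 => ⟨(iterLineGraph G k).2.edgeSet, (iterLineGraph G k).2.lineGraph⟩

noncomputable instance iterLineGraphFintype {V : Type u} [Fintype V] (G : SimpleGraph V) :
    ∀ m : ℕ, Fintype (iterLineGraph G m).1
  | 0 => ‹Fintype V›
  | m + 1 => by
      haveI := iterLineGraphFintype G m
      exact (show Fintype ((iterLineGraph G m).2.edgeSet) from Fintype.ofFinite _)

/-- The product `H^(m) = H^(0,1) ⬝ H^(1,2) ⬝ ... ⬝ H^(m-1,m)` of the incidence matrices of
the iterated line graphs, where `H^(k,k+1)` is the incidence matrix of `L^k(G)`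
(by convention, the empty product `H^(0)` is the identity). -/
noncomputable def iterIncProd {V : Type u} [Fintype V] (G : SimpleGraph V) :
    ∀ m : ℕ, Matrix V (iterLineGraph G m).1 ℝ
  | 0 => (1 : Matrix V V ℝ)
  | m + 1 => iterIncProd G m * edgeIncMatrix (iterLineGraph G m).2

/-! ### Instance-free versions of `A + I` and matrix powers -/

/-- `A + I` for the graph `Γ`, defined without decidability instances. -/
noncomputable def adjOne {W : Type*} (Γ : SimpleGraph W) : Matrix W W ℝ :=
  fun i j => if Γ.Adj i j ∨ i = j then 1 else 0

/-- Matrix powers, defined without a `DecidableEq` instance on the index type. -/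
noncomputable def matPow {α : Type*} [Fintype α] (M : Matrix α α ℝ) : ℕ → Matrix α α ℝ
  | 0 => fun i j => if i = j then 1 else 0
  | j + 1 => matPow M j * M

lemma matPow_zero {α : Type*} [Fintype α] [DecidableEq α] (M : Matrix α α ℝ) :
    matPow M 0 = (1 : Matrix α α ℝ) := by
  rw [matPow]
  ext i j
  by_cases h : i = j <;> simp [Matrix.one_apply, h]

/-! ### Supports of nonnegative matrices -/

section Supports

variable {α β γ : Type*}

/-- Entrywise nonnegativity of a real matrix. -/
abbrev MNonneg (M : Matrix α β ℝ) : Prop := ∀ i j, 0 ≤ M i j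

/-- Two matrices have the same support (positivity pattern). -/
abbrev SuppEq (M N : Matrix α β ℝ) : Prop := ∀ i j, 0 < M i j ↔ 0 < N i j

lemma SuppEq.refl (M : Matrix α β ℝ) : SuppEq M M := fun _ _ => Iff.rfl

lemma SuppEq.symm' {M N : Matrix α β ℝ} (h : SuppEq M N) : SuppEq N M :=
  fun i j => (h i j).symm

lemma SuppEq.trans' {M N P : Matrix α β ℝ} (h1 : SuppEq M N) (h2 : SuppEq N P) :
    SuppEq M P := fun i j => (h1 i j).trans (h2 i j)

lemma suppEq_of_eq {M N : Matrix α β ℝ} (h : M = N) : SuppEq M N := by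
  subst h; exact SuppEq.refl M

lemma sum_pos_iff_exists {s : Finset α} {f : α → ℝ} (h : ∀ i ∈ s, 0 ≤ f i) :
    0 < ∑ i ∈ s, f i ↔ ∃ i ∈ s, 0 < f i := by
  constructor
  · intro hs
    by_contra hc
    push_neg at hc
    have : ∑ i ∈ s, f i ≤ 0 := Finset.sum_nonpos hc
    linarith
  · rintro ⟨i, hi, hfi⟩
    exact Finset.sum_pos' h ⟨i, hi, hfi⟩

lemma MNonneg.mul [Fintype β] {M : Matrix α β ℝ} {N : Matrix β γ ℝ}
    (hM : MNonneg M) (hN : MNonneg N) : MNonneg (M * N) := fun i k => by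
  rw [Matrix.mul_apply]
  exact Finset.sum_nonneg fun j _ => mul_nonneg (hM i j) (hN j k)

lemma MNonneg.transpose {M : Matrix α β ℝ} (hM : MNonneg M) : MNonneg Mᵀ :=
  fun i j => hM j i

lemma matPow_nonneg [Fintype α] {M : Matrix α α ℝ} (hM : MNonneg M) :
    ∀ j : ℕ, MNonneg (matPow M j)
  | 0 => by
      rw [matPow]
      intro i j
      by_cases h : i = j <;> simp [h]
  | j + 1 => by
      rw [matPow]
      exact (matPow_nonneg hM j).mul hM

lemma mul_entry_pos_iff [Fintype β] {M : Matrix α β ℝ} {N : Matrix β γ ℝ}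
    (hM : MNonneg M) (hN : MNonneg N) (i : α) (k : γ) :
    0 < (M * N) i k ↔ ∃ j, 0 < M i j ∧ 0 < N j k := by
  rw [Matrix.mul_apply, sum_pos_iff_exists (fun j _ => mul_nonneg (hM i j) (hN j k))]
  constructor
  · rintro ⟨j, -, hj⟩
    rcases mul_pos_iff.mp hj with ⟨h1, h2⟩ | ⟨h1, h2⟩
    · exact ⟨j, h1, h2⟩
    · exact absurd (hM i j) (not_le.mpr h1)
  · rintro ⟨j, h1, h2⟩
    exact ⟨j, Finset.mem_univ j, mul_pos h1 h2⟩

lemma SuppEq.mul [Fintype β] {M M' : Matrix α β ℝ} {N N' : Matrix β γ ℝ}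
    (hM : MNonneg M) (hM' : MNonneg M') (hN : MNonneg N) (hN' : MNonneg N')
    (e1 : SuppEq M M') (e2 : SuppEq N N') : SuppEq (M * N) (M' * N') := fun i k => by
  rw [mul_entry_pos_iff hM hN, mul_entry_pos_iff hM' hN']
  exact exists_congr fun j => and_congr (e1 i j) (e2 j k)

lemma suppEq_matPow [Fintype α] {M N : Matrix α α ℝ}
    (hM : MNonneg M) (hN : MNonneg N) (e : SuppEq M N) :
    ∀ j : ℕ, SuppEq (matPow M j) (matPow N j)
  | 0 => by
      intro i j
      rw [matPow, matPow]
  | j + 1 => by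
      rw [matPow, matPow]
      exact SuppEq.mul (matPow_nonneg hM j) (matPow_nonneg hN j) hM hN
        (suppEq_matPow hM hN e j) e

end Supports

/-! ### Graph-theoretic support lemmas -/

section Graph

variable {W : Type u} [Fintype W] (Γ : SimpleGraph W) [Fintype Γ.edgeSet]

omit [Fintype W] [Fintype ↑Γ.edgeSet] in
lemma edgeInc_nonneg : MNonneg (edgeIncMatrix Γ) := by
  intro v e
  unfold edgeIncMatrix
  split <;> norm_num

omit [Fintype W] [Fintype ↑Γ.edgeSet] in
lemma edgeInc_pos_iff (v : W) (e : Γ.edgeSet) :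
    0 < edgeIncMatrix Γ v e ↔ v ∈ (e : Sym2 W) := by
  by_cases h : v ∈ (e : Sym2 W) <;> simp [edgeIncMatrix, h]

lemma adjOne_nonneg {W' : Type*} (Γ' : SimpleGraph W') : MNonneg (adjOne Γ') := by
  intro i j
  unfold adjOne
  split <;> norm_num

lemma adjOne_pos_iff {W' : Type*} (Γ' : SimpleGraph W') (i j : W') :
    0 < adjOne Γ' i j ↔ (Γ'.Adj i j ∨ i = j) := by
  by_cases h : Γ'.Adj i j ∨ i = j <;> simp [adjOne, h]

omit [Fintype W] in
/-- `supp (H Hᵀ) = supp (A + I)` when `Γ` has no isolated vertices. -/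
lemma suppEq_HHt (hniso : ∀ v : W, ∃ w, Γ.Adj v w) :
    SuppEq (edgeIncMatrix Γ * (edgeIncMatrix Γ)ᵀ) (adjOne Γ) := by
  intro x y
  rw [mul_entry_pos_iff (edgeInc_nonneg Γ) (edgeInc_nonneg Γ).transpose,
    adjOne_pos_iff]
  simp only [Matrix.transpose_apply, edgeInc_pos_iff]
  constructor
  · rintro ⟨e, hx, hy⟩
    by_cases hxy : x = y
    · exact Or.inr hxy
    · exact Or.inl (SimpleGraph.adj_iff_exists_edge.mpr ⟨hxy, e.1, e.2, hx, hy⟩)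
  · rintro (hadj | rfl)
    · exact ⟨⟨s(x, y), hadj⟩, Sym2.mem_mk_left x y, Sym2.mem_mk_right x y⟩
    · obtain ⟨w, hw⟩ := hniso x
      exact ⟨⟨s(x, w), hw⟩, Sym2.mem_mk_left x w, Sym2.mem_mk_left x w⟩

/-- `supp (Hᵀ H) = supp (A_{L(Γ)} + I)` (no hypotheses needed). -/
lemma suppEq_HtH :
    SuppEq ((edgeIncMatrix Γ)ᵀ * edgeIncMatrix Γ) (adjOne Γ.lineGraph) := by
  intro e f
  rw [mul_entry_pos_iff (edgeInc_nonneg Γ).transpose (edgeInc_nonneg Γ),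
    adjOne_pos_iff]
  simp only [Matrix.transpose_apply, edgeInc_pos_iff]
  constructor
  · rintro ⟨v, hv1, hv2⟩
    by_cases hef : e = f
    · exact Or.inr hef
    · exact Or.inl (SimpleGraph.lineGraph_adj_iff_exists.mpr ⟨hef, v, hv1, hv2⟩)
  · rintro (hadj | rfl)
    · obtain ⟨-, v, hv1, hv2⟩ := SimpleGraph.lineGraph_adj_iff_exists.mp hadj
      exact ⟨v, hv1, hv2⟩
    · exact ⟨(e : Sym2 W).out.1, Sym2.out_fst_mem _, Sym2.out_fst_mem _⟩

/-- Push-through identity: `H (HᵀH)^j = (HHᵀ)^j H`. -/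
lemma push_through (j : ℕ) :
    edgeIncMatrix Γ * matPow ((edgeIncMatrix Γ)ᵀ * edgeIncMatrix Γ) j =
      matPow (edgeIncMatrix Γ * (edgeIncMatrix Γ)ᵀ) j * edgeIncMatrix Γ := by
  induction j with
  | zero =>
      rw [matPow_zero, matPow_zero, Matrix.mul_one, Matrix.one_mul]
  | succ j ih =>
      rw [matPow, matPow, ← Matrix.mul_assoc, ih]
      simp only [Matrix.mul_assoc]

/-- Key step: `supp (H (A_L + I)^j Hᵀ) = supp ((A + I)^(j+1))` for a graph with no
isolated vertices. -/
lemma key_step (hniso : ∀ v : W, ∃ w, Γ.Adj v w) (j : ℕ) :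
    SuppEq (edgeIncMatrix Γ * matPow (adjOne Γ.lineGraph) j * (edgeIncMatrix Γ)ᵀ)
      (matPow (adjOne Γ) (j + 1)) := by
  have hHnn : MNonneg (edgeIncMatrix Γ) := edgeInc_nonneg Γ
  have hHtHnn : MNonneg ((edgeIncMatrix Γ)ᵀ * edgeIncMatrix Γ) :=
    hHnn.transpose.mul hHnn
  have h1 : SuppEq (edgeIncMatrix Γ * matPow (adjOne Γ.lineGraph) j * (edgeIncMatrix Γ)ᵀ)
      (edgeIncMatrix Γ * matPow ((edgeIncMatrix Γ)ᵀ * edgeIncMatrix Γ) j *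
        (edgeIncMatrix Γ)ᵀ) := by
    refine SuppEq.mul ?_ ?_ hHnn.transpose hHnn.transpose ?_ (SuppEq.refl _)
    · exact hHnn.mul (matPow_nonneg (adjOne_nonneg _) j)
    · exact hHnn.mul (matPow_nonneg hHtHnn j)
    · exact SuppEq.mul hHnn hHnn (matPow_nonneg (adjOne_nonneg _) j)
        (matPow_nonneg hHtHnn j) (SuppEq.refl _)
        (suppEq_matPow (adjOne_nonneg _) hHtHnn ((suppEq_HtH Γ).symm') j)
  have h2 : edgeIncMatrix Γ * matPow ((edgeIncMatrix Γ)ᵀ * edgeIncMatrix Γ) j *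
      (edgeIncMatrix Γ)ᵀ = matPow (edgeIncMatrix Γ * (edgeIncMatrix Γ)ᵀ) (j + 1) := by
    rw [push_through, matPow]
    simp only [Matrix.mul_assoc]
  have h3 : SuppEq (matPow (edgeIncMatrix Γ * (edgeIncMatrix Γ)ᵀ) (j + 1))
      (matPow (adjOne Γ) (j + 1)) :=
    suppEq_matPow (hHnn.mul hHnn.transpose) (adjOne_nonneg _) (suppEq_HHt Γ hniso) (j + 1)
  exact h1.trans' ((suppEq_of_eq h2).trans' h3)

end Graph

/-! ### The main induction -/

lemma iterIncProd_nonneg {V : Type u} [Fintype V] (G : SimpleGraph V) :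
    ∀ m : ℕ, MNonneg (iterIncProd G m)
  | 0 => by
      rw [iterIncProd]
      intro i j
      exact (show MNonneg (1 : Matrix V V ℝ) from fun i j => by
        by_cases h : i = j <;> simp [Matrix.one_apply, h]) i j
  | m + 1 => by
      rw [iterIncProd]
      exact (iterIncProd_nonneg G m).mul (edgeInc_nonneg _)

lemma main_claim {V : Type u} [Fintype V] (G : SimpleGraph V) :
    ∀ k : ℕ, (∀ i, i < k → ∀ x : (iterLineGraph G i).1, ∃ y, (iterLineGraph G i).2.Adj x y) →
      ∀ j : ℕ,
      SuppEq (iterIncProd G k * matPow (adjOne (iterLineGraph G k).2) j *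
          (iterIncProd G k)ᵀ)
        (matPow (adjOne G) (k + j)) := by
  intro k
  induction k with
  | zero =>
      intro _ j
      have h0 : iterIncProd G 0 * matPow (adjOne (iterLineGraph G 0).2) j *
          (iterIncProd G 0)ᵀ = matPow (adjOne G) j := by
        change (1 : Matrix V V ℝ) * matPow (adjOne G) j * (1 : Matrix V V ℝ)ᵀ = _
        simp only [iterIncProd, Matrix.transpose_one, Matrix.mul_one, Matrix.one_mul]
      rw [Nat.zero_add]
      exact suppEq_of_eq h0
  | succ k ih =>
      intro hniso j
      have hnisok : ∀ x : (iterLineGraph G k).1, ∃ y, (iterLineGraph G k).2.Adj x y :=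
        hniso k (Nat.lt_succ_self k)
      have ihk := ih (fun i hi => hniso i (Nat.lt_succ_of_lt hi)) (j + 1)
      letI : Fintype ((iterLineGraph G k).2.edgeSet) := iterLineGraphFintype G (k + 1)
      have hPnn : MNonneg (iterIncProd G k) := iterIncProd_nonneg G k
      have hHnn : MNonneg (edgeIncMatrix (iterLineGraph G k).2) := edgeInc_nonneg _
      have hmid := key_step (iterLineGraph G k).2 hnisok j
      have hmidnn : MNonneg (edgeIncMatrix (iterLineGraph G k).2 *
          matPow (adjOne ((iterLineGraph G k).2.lineGraph)) j *
          (edgeIncMatrix (iterLineGraph G k).2)ᵀ) :=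
        (hHnn.mul (matPow_nonneg (adjOne_nonneg _) j)).mul hHnn.transpose
      have hpownn : MNonneg (matPow (adjOne (iterLineGraph G k).2) (j + 1)) :=
        matPow_nonneg (adjOne_nonneg _) (j + 1)
      have h2 : iterIncProd G (k + 1) *
          matPow (adjOne (iterLineGraph G (k + 1)).2) j *
          (iterIncProd G (k + 1))ᵀ =
          iterIncProd G k * (edgeIncMatrix (iterLineGraph G k).2 *
            matPow (adjOne ((iterLineGraph G k).2.lineGraph)) j *
            (edgeIncMatrix (iterLineGraph G k).2)ᵀ) * (iterIncProd G k)ᵀ := by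
        simp only [iterIncProd, Matrix.transpose_mul]
        change iterIncProd G k * edgeIncMatrix (iterLineGraph G k).2 *
          matPow (adjOne ((iterLineGraph G k).2.lineGraph)) j *
          (iterIncProd G k * edgeIncMatrix (iterLineGraph G k).2)ᵀ = _
        simp only [Matrix.transpose_mul]
        simp only [Matrix.mul_assoc]
      have step1 : SuppEq
          (iterIncProd G k * (edgeIncMatrix (iterLineGraph G k).2 *
            matPow (adjOne ((iterLineGraph G k).2.lineGraph)) j *
            (edgeIncMatrix (iterLineGraph G k).2)ᵀ) * (iterIncProd G k)ᵀ)
          (iterIncProd G k * matPow (adjOne (iterLineGraph G k).2) (j + 1) *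
            (iterIncProd G k)ᵀ) := by
        refine SuppEq.mul ?_ ?_ hPnn.transpose hPnn.transpose ?_ (SuppEq.refl _)
        · exact hPnn.mul hmidnn
        · exact hPnn.mul hpownn
        · exact SuppEq.mul hPnn hPnn hmidnn hpownn (SuppEq.refl _) hmid
      have hexp : k + (j + 1) = k + 1 + j := by omega
      rw [hexp] at ihk
      exact (suppEq_of_eq h2).trans' (step1.trans' ihk)

/-- The paper's Lemma 1: if none of `L⁰(G), …, L^{m-1}(G)` has isolated vertices, then for all
vertices `u v` of `G`, `((A + I)^m) u v > 0 ↔ (H^(m) ⬝ (H^(m))ᵀ) u v > 0`. -/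
theorem adj_add_one_pow_pos_iff_iterIncProd_pos
    {V : Type u} [Fintype V] [DecidableEq V] (G : SimpleGraph V) [DecidableRel G.Adj]
    (m : ℕ) (hm : 1 ≤ m)
    (hiso : ∀ k, k ≤ m - 1 → ∀ x : (iterLineGraph G k).1, ∃ y, (iterLineGraph G k).2.Adj x y)
    (u v : V) :
    0 < (((G.adjMatrix ℝ + 1) ^ m : Matrix V V ℝ)) u v ↔
      0 < (iterIncProd G m * (iterIncProd G m)ᵀ) u v := by
  have hiso' : ∀ i, i < m → ∀ x : (iterLineGraph G i).1, ∃ y, (iterLineGraph G i).2.Adj x y :=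
    fun i hi => hiso i (by omega)
  have bridge : ∀ n : ℕ, ((G.adjMatrix ℝ + 1) ^ n : Matrix V V ℝ) = matPow (adjOne G) n := by
    intro n
    induction n with
    | zero =>
        rw [pow_zero, matPow_zero]
    | succ n ihn =>
        rw [pow_succ, ihn, matPow]
        congr 1
        ext i j
        by_cases h : G.Adj i j <;> by_cases h' : i = j <;>
          simp [adjOne, Matrix.add_apply, Matrix.one_apply, h, h']
  have h := main_claim G m hiso' 0
  rw [matPow_zero, Matrix.mul_one, Nat.add_zero] at h
  rw [bridge m]
  exact (h u v).symm
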